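/- Fix r̄_j, r̄_k > 0 and inversive distances I_ij, I_ik, I_jk ≥ 0, and define f(r_i) = arccosh(cosh r_i cosh r̄_j + I_ij sinh r_i sinh r̄_j) + arccosh(cosh r_i cosh r̄_k + I_ik sinh r_i sinh r̄_k) - arccosh(cosh r̄_j cosh r̄_k + I_jk sinh r̄_j sinh r̄_k) for r_i > 0. Then f is strictly increasing, f(r_i) → +∞ as r_i → +∞, and the limit of f as r_i → 0⁺ is negative if I_jk > 1, zero if I_jk = 1, and positive if 0 ≤ I_jk < 1. -/

import Mathlib

open Real Set Filter

/-- The inverse hyperbolic cosine, `arcosh x = log (x + √(x² - 1))` (for `x ≥ 1`). -/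
noncomputable def arcosh (x : ℝ) : ℝ := Real.log (x + Real.sqrt (x ^ 2 - 1))

lemma _root_.arcosh_strictMonoOn : StrictMonoOn _root_.arcosh (Ici 1) := by
  intro x hx y _ hxy
  have hx1 : (1:ℝ) ≤ x := hx
  unfold _root_.arcosh
  apply Real.log_lt_log
  · have := Real.sqrt_nonneg (x ^ 2 - 1); linarith
  · have h1 : Real.sqrt (x ^ 2 - 1) ≤ Real.sqrt (y ^ 2 - 1) := by
      apply Real.sqrt_le_sqrt; nlinarith
    linarith

lemma _root_.arcosh_cosh {r : ℝ} (hr : 0 ≤ r) : _root_.arcosh (Real.cosh r) = r := by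
  unfold _root_.arcosh
  have h : Real.cosh r ^ 2 - 1 = Real.sinh r ^ 2 := by
    nlinarith [Real.cosh_sq_sub_sinh_sq r]
  rw [h, Real.sqrt_sq (Real.sinh_nonneg_iff.mpr hr), Real.cosh_add_sinh, Real.log_exp]

lemma _root_.log_le_arcosh {x : ℝ} (hx : 0 < x) : Real.log x ≤ _root_.arcosh x := by
  unfold _root_.arcosh
  apply Real.log_le_log hx
  have := Real.sqrt_nonneg (x ^ 2 - 1); linarith

lemma _root_.arcosh_nonneg {x : ℝ} (hx : 1 ≤ x) : 0 ≤ _root_.arcosh x := by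
  unfold _root_.arcosh
  apply Real.log_nonneg
  have := Real.sqrt_nonneg (x ^ 2 - 1); linarith

lemma _root_.continuousAt_arcosh {x : ℝ} (hx : 1 < x) : ContinuousAt _root_.arcosh x := by
  unfold _root_.arcosh
  apply ContinuousAt.log
  · fun_prop
  · have := Real.sqrt_nonneg (x ^ 2 - 1); linarith

theorem defect_function_properties (rj rk Iij Iik Ijk : ℝ)
    (hrj : 0 < rj) (hrk : 0 < rk) (hIij : 0 ≤ Iij) (hIik : 0 ≤ Iik) (hIjk : 0 ≤ Ijk) :
    let f : ℝ → ℝ := fun ri =>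
      _root_.arcosh (Real.cosh ri * Real.cosh rj + Iij * Real.sinh ri * Real.sinh rj) +
      _root_.arcosh (Real.cosh ri * Real.cosh rk + Iik * Real.sinh ri * Real.sinh rk) -
      _root_.arcosh (Real.cosh rj * Real.cosh rk + Ijk * Real.sinh rj * Real.sinh rk)
    StrictMonoOn f (Ioi 0) ∧
    Tendsto f atTop atTop ∧
    Tendsto f (nhdsWithin 0 (Ioi 0))
      (nhds (rj + rk - _root_.arcosh (Real.cosh rj * Real.cosh rk + Ijk * Real.sinh rj * Real.sinh rk))) ∧
    (1 < Ijk → rj + rk - _root_.arcosh (Real.cosh rj * Real.cosh rk + Ijk * Real.sinh rj * Real.sinh rk) < 0) ∧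
    (Ijk = 1 → rj + rk - _root_.arcosh (Real.cosh rj * Real.cosh rk + Ijk * Real.sinh rj * Real.sinh rk) = 0) ∧
    (Ijk < 1 → 0 < rj + rk - _root_.arcosh (Real.cosh rj * Real.cosh rk + Ijk * Real.sinh rj * Real.sinh rk)) := by
  intro f
  set c : ℝ := _root_.arcosh (Real.cosh rj * Real.cosh rk + Ijk * Real.sinh rj * Real.sinh rk) with hc
  have hsrj : 0 < Real.sinh rj := Real.sinh_pos_iff.mpr hrj
  have hsrk : 0 < Real.sinh rk := Real.sinh_pos_iff.mpr hrk
  -- g-functions and preliminary facts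
  have hg1 : ∀ (I s : ℝ), 0 ≤ I → 0 < s → ∀ x, 0 ≤ x →
      1 ≤ Real.cosh x * Real.cosh s + I * Real.sinh x * Real.sinh s := by
    intro I s hI hs x hx
    have h1 := Real.one_le_cosh x
    have h2 := Real.one_le_cosh s
    have h3 : 0 ≤ Real.sinh x := Real.sinh_nonneg_iff.mpr hx
    have h4 : 0 < Real.sinh s := Real.sinh_pos_iff.mpr hs
    have h5 : (1:ℝ) * 1 ≤ Real.cosh x * Real.cosh s := mul_le_mul h1 h2 zero_le_one (by linarith)
    have h6 : 0 ≤ I * Real.sinh x * Real.sinh s := mul_nonneg (mul_nonneg hI h3) h4.le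
    linarith
  have hgmono : ∀ (I s : ℝ), 0 ≤ I → 0 < s → ∀ x ∈ Ioi (0:ℝ), ∀ y ∈ Ioi (0:ℝ), x < y →
      Real.cosh x * Real.cosh s + I * Real.sinh x * Real.sinh s <
      Real.cosh y * Real.cosh s + I * Real.sinh y * Real.sinh s := by
    intro I s hI hs x hx y hy hxy
    have hx0 : (0:ℝ) < x := hx
    have h1 : Real.cosh x < Real.cosh y := by
      rw [Real.cosh_lt_cosh, abs_of_pos hx0, abs_of_pos (hx0.trans hxy)]; exact hxy
    have h2 : Real.sinh x ≤ Real.sinh y := Real.sinh_le_sinh.mpr hxy.le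
    have h3 := Real.one_le_cosh s
    have h4 : 0 ≤ Real.sinh s := (Real.sinh_pos_iff.mpr hs).le
    have h5 : 0 < (Real.cosh y - Real.cosh x) * Real.cosh s :=
      mul_pos (by linarith) (Real.cosh_pos s)
    have h6 : 0 ≤ I * Real.sinh s * (Real.sinh y - Real.sinh x) :=
      mul_nonneg (mul_nonneg hI h4) (by linarith)
    nlinarith
  refine ⟨?_, ?_, ?_, ?_, ?_, ?_⟩
  · -- strict mono
    intro x hx y hy hxy
    have hx0 : (0:ℝ) < x := hx
    have hy0 : (0:ℝ) < y := hy
    have hA := _root_.arcosh_strictMonoOn (hg1 Iij rj hIij hrj x hx0.le) (hg1 Iij rj hIij hrj y hy0.le)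
      (hgmono Iij rj hIij hrj x hx y hy hxy)
    have hB := _root_.arcosh_strictMonoOn (hg1 Iik rk hIik hrk x hx0.le) (hg1 Iik rk hIik hrk y hy0.le)
      (hgmono Iik rk hIik hrk x hx y hy hxy)
    simp only [f]
    linarith
  · -- tendsto atTop
    apply tendsto_atTop_mono' atTop (show ∀ᶠ ri in atTop, ri - (Real.log 2 + c) ≤ f ri from ?_)
    · exact (tendsto_atTop_add_const_right atTop (-(Real.log 2 + c)) tendsto_id).congr
        (fun x => by simp only [id_eq]; ring)
    · filter_upwards [eventually_ge_atTop (0:ℝ)] with ri hri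
      have h1 : 1 ≤ Real.cosh ri * Real.cosh rj + Iij * Real.sinh ri * Real.sinh rj :=
        hg1 Iij rj hIij hrj ri hri
      have h2 : 1 ≤ Real.cosh ri * Real.cosh rk + Iik * Real.sinh ri * Real.sinh rk :=
        hg1 Iik rk hIik hrk ri hri
      have hB : 0 ≤ _root_.arcosh (Real.cosh ri * Real.cosh rk + Iik * Real.sinh ri * Real.sinh rk) :=
        _root_.arcosh_nonneg h2
      have hcosh : Real.exp ri / 2 ≤ Real.cosh ri := by
        rw [Real.cosh_eq]; have := Real.exp_pos (-ri); linarith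
      have hle : Real.cosh ri ≤ Real.cosh ri * Real.cosh rj + Iij * Real.sinh ri * Real.sinh rj := by
        have h3 : 0 ≤ Real.sinh ri := Real.sinh_nonneg_iff.mpr hri
        have h5 : 0 ≤ Real.cosh ri * (Real.cosh rj - 1) :=
          mul_nonneg (Real.cosh_pos ri).le (by linarith [Real.one_le_cosh rj])
        have h6 : 0 ≤ Iij * Real.sinh ri * Real.sinh rj := mul_nonneg (mul_nonneg hIij h3) hsrj.le
        nlinarith
      have hA : ri - Real.log 2 ≤
          _root_.arcosh (Real.cosh ri * Real.cosh rj + Iij * Real.sinh ri * Real.sinh rj) := by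
        have hlog : Real.log (Real.exp ri / 2) ≤
            Real.log (Real.cosh ri * Real.cosh rj + Iij * Real.sinh ri * Real.sinh rj) :=
          Real.log_le_log (by positivity) (hcosh.trans hle)
        rw [Real.log_div (Real.exp_ne_zero ri) two_ne_zero, Real.log_exp] at hlog
        exact hlog.trans (_root_.log_le_arcosh (by linarith))
      simp only [f]
      linarith
  · -- tendsto at 0+
    have hcont : ContinuousAt f 0 := by
      have hA : ContinuousAt (fun ri => _root_.arcosh (Real.cosh ri * Real.cosh rj + Iij * Real.sinh ri * Real.sinh rj)) 0 := by
        apply ContinuousAt.comp (_root_.continuousAt_arcosh ?_) (by fun_prop)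
        simp [Real.one_lt_cosh.mpr hrj.ne']
      have hB : ContinuousAt (fun ri => _root_.arcosh (Real.cosh ri * Real.cosh rk + Iik * Real.sinh ri * Real.sinh rk)) 0 := by
        apply ContinuousAt.comp (_root_.continuousAt_arcosh ?_) (by fun_prop)
        simp [Real.one_lt_cosh.mpr hrk.ne']
      exact (hA.add hB).sub continuousAt_const
    have : Tendsto f (nhdsWithin 0 (Ioi 0)) (nhds (f 0)) := hcont.tendsto.mono_left nhdsWithin_le_nhds
    convert this using 2
    simp only [f, Real.cosh_zero, Real.sinh_zero, one_mul, mul_zero, zero_mul, mul_comm]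
    rw [add_zero, add_zero, _root_.arcosh_cosh hrj.le, _root_.arcosh_cosh hrk.le, hc]
  · -- Ijk > 1
    intro h
    have hkey : Real.cosh (rj + rk) < Real.cosh rj * Real.cosh rk + Ijk * Real.sinh rj * Real.sinh rk := by
      rw [Real.cosh_add]; nlinarith [mul_pos (mul_pos (sub_pos.mpr h) hsrj) hsrk]
    have := _root_.arcosh_strictMonoOn (Real.one_le_cosh (rj + rk))
      ((Real.one_le_cosh (rj + rk)).trans hkey.le) hkey
    rw [_root_.arcosh_cosh (by linarith)] at this
    linarith
  · intro h
    subst h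
    rw [hc, show Real.cosh rj * Real.cosh rk + 1 * Real.sinh rj * Real.sinh rk
      = Real.cosh (rj + rk) from by rw [Real.cosh_add]; ring, _root_.arcosh_cosh (by linarith)]
    ring
  · intro h
    have hkey : Real.cosh rj * Real.cosh rk + Ijk * Real.sinh rj * Real.sinh rk < Real.cosh (rj + rk) := by
      rw [Real.cosh_add]; nlinarith [mul_pos (mul_pos (sub_pos.mpr h) hsrj) hsrk]
    have h1 : 1 ≤ Real.cosh rj * Real.cosh rk + Ijk * Real.sinh rj * Real.sinh rk :=
      hg1 Ijk rk hIjk hrk rj hrj.le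
    have := _root_.arcosh_strictMonoOn h1 (h1.trans hkey.le) hkey
    rw [_root_.arcosh_cosh (by linarith)] at this
    linarith
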